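/- For every linked pair (P,Q), sign(P,Q) ∈ {1,-1}; i.e., the sign is never zero. -/

import Mathlib

/-!
Combinatorial model of the Goldman–Turaev Lie bialgebra of curves on a surface
with boundary, following M. Chas, "Combinatorial Lie bialgebras of curves on
surfaces".

The alphabet `𝔸ₙ = {a₁,…,aₙ, ā₁,…,āₙ}` is modelled by `Letter n := Fin n × Bool`,
with the bar involution flipping the boolean.  Linear words are lists of letters;
a cyclic word is a list up to rotation (`List.IsRotated`).
-/

open List

abbrev Letter (n : ℕ) := Fin n × Bool

namespace ChasCW

variable {n : ℕ}

/-- The bar involution `x ↦ x̄` on letters. -/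
def bar (x : Letter n) : Letter n := (x.1, !x.2)

/-- The formal inverse `W̄` of a linear word `W`. -/
def wordInv (w : List (Letter n)) : List (Letter n) := (w.map bar).reverse

/-- A linear word is freely reduced if no letter is followed by its inverse. -/
def Reduced (w : List (Letter n)) : Prop := w.Chain' (fun a b => b ≠ bar a)

/-- A nonempty word all of whose cyclic rotations are freely reduced:
a representative of a reduced cyclic word. -/
def CyclicallyReduced (w : List (Letter n)) : Prop :=
  w ≠ [] ∧ ∀ i, Reduced (w.rotate i)

/-- The type of cyclic words: lists of letters up to rotation. -/
abbrev CWord (n : ℕ) := Quotient (List.IsRotated.setoid (Letter n))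

/-- The cyclic word `c(w)` determined by a linear word `w`. -/
def cw (w : List (Letter n)) : CWord n := Quotient.mk _ w

/-- A surface symbol: a reduced cyclic word containing every letter of the
alphabet exactly once. -/
def SurfaceSymbol (O : List (Letter n)) : Prop :=
  CyclicallyReduced O ∧ ∀ x : Letter n, O.count x = 1

/-- `w` embeds injectively and orientation-preservingly as a cyclic subsequence
of the cyclic word `O`. -/
def CyclicEmbeds (w O : List (Letter n)) : Prop :=
  w.Nodup ∧ ∃ i ≤ w.length, ∃ j ≤ O.length, (w.rotate i).Sublist (O.rotate j)

open Classical in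
/-- The orientation `o(w) ∈ {-1,0,1}` of a cyclic word relative to the surface
symbol `O`: `1` for an orientation-preserving embedding of rings, `-1` for an
orientation-reversing one, `0` otherwise. -/
noncomputable def orient (O w : List (Letter n)) : ℤ :=
  if CyclicEmbeds w O then 1 else if CyclicEmbeds w O.reverse then -1 else 0

/-- Case (1) of Definition 2.1: `P = p₁p₂`, `Q = q₁q₂` and
`o(c(p̄₁q̄₁p₂q₂)) ≠ 0`. -/
def Linked1 (O : List (Letter n)) (p₁ p₂ q₁ q₂ : Letter n) : Prop :=
  Reduced [p₁, p₂] ∧ Reduced [q₁, q₂] ∧ orient O [bar p₁, bar q₁, p₂, q₂] ≠ 0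

/-- Case (2) of Definition 2.1: `P = p₁Yp₂`, `Q = q₁Yq₂`, `p₁ ≠ q₁`, `p₂ ≠ q₂`,
`Y = x₁X x₂` nonempty, and `o(c(p̄₁q̄₁x₁)) = o(c(p₂q₂x̄₂))`. -/
def Linked2 (O : List (Letter n)) (p₁ p₂ q₁ q₂ x₁ x₂ : Letter n)
    (Y : List (Letter n)) : Prop :=
  Y ≠ [] ∧ Y.head? = some x₁ ∧ Y.getLast? = some x₂ ∧
  p₁ ≠ q₁ ∧ p₂ ≠ q₂ ∧
  Reduced (p₁ :: (Y ++ [p₂])) ∧ Reduced (q₁ :: (Y ++ [q₂])) ∧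
  orient O [bar p₁, bar q₁, x₁] = orient O [p₂, q₂, bar x₂]

/-- Case (3) of Definition 2.1: `P = p₁Yp₂`, `Q = q₁Ȳq₂`, `p₁ ≠ q̄₂`, `p₂ ≠ q̄₁`,
`Y = x₁X x₂` nonempty, and `o(c(q₂p̄₁x₁)) = o(c(q̄₁p₂x̄₂))`. -/
def Linked3 (O : List (Letter n)) (p₁ p₂ q₁ q₂ x₁ x₂ : Letter n)
    (Y : List (Letter n)) : Prop :=
  Y ≠ [] ∧ Y.head? = some x₁ ∧ Y.getLast? = some x₂ ∧
  p₁ ≠ bar q₂ ∧ p₂ ≠ bar q₁ ∧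
  Reduced (p₁ :: (Y ++ [p₂])) ∧ Reduced (q₁ :: (wordInv Y ++ [q₂])) ∧
  orient O [q₂, bar p₁, x₁] = orient O [bar q₁, p₂, bar x₂]

/-- `(P,Q)` is an `O`-linked pair (Definition 2.1). -/
def LinkedPair (O P Q : List (Letter n)) : Prop :=
  (∃ p₁ p₂ q₁ q₂, P = [p₁, p₂] ∧ Q = [q₁, q₂] ∧ Linked1 O p₁ p₂ q₁ q₂) ∨
  (∃ p₁ p₂ q₁ q₂ x₁ x₂ Y, P = p₁ :: (Y ++ [p₂]) ∧ Q = q₁ :: (Y ++ [q₂]) ∧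
    Linked2 O p₁ p₂ q₁ q₂ x₁ x₂ Y) ∨
  (∃ p₁ p₂ q₁ q₂ x₁ x₂ Y, P = p₁ :: (Y ++ [p₂]) ∧ Q = q₁ :: (wordInv Y ++ [q₂]) ∧
    Linked3 O p₁ p₂ q₁ q₂ x₁ x₂ Y)

/-- The sign of a linked pair `(P,Q)`, computed from the (unique) decomposition
of `P` and `Q` prescribed by Definition 2.1. -/
noncomputable def signLP (O P Q : List (Letter n)) : ℤ :=
  match P, Q with
  | p₁ :: P', q₁ :: Q' =>
    match P'.getLast?, Q'.getLast? with
    | some p₂, some q₂ =>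
      let Y := P'.dropLast
      let Z := Q'.dropLast
      if Y = [] then orient O [bar p₁, bar q₁, p₂, q₂]
      else
        match Y.head?, Y.getLast? with
        | some x₁, some _ =>
          if Z = wordInv Y then orient O [q₂, bar p₁, x₁]
          else orient O [bar p₁, bar q₁, x₁]
        | _, _ => 0
    | _, _ => 0
  | _, _ => 0

/-- The subword of length `l` of (a large power of) the cyclic word `V`,
starting at position `i`.  This encodes occurrences of subwords of powers
of `V`. -/
def segment (V : List (Letter n)) (i l : ℕ) : List (Letter n) :=
  (((List.replicate (l + 1) V).flatten).rotate i).take l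

/-- The set `LP₁(W)` of linked pairs of occurrences of subwords of `W`,
an occurrence being encoded by its starting position and its length. -/
def LP1 (O W : List (Letter n)) : Set ((ℕ × ℕ) × (ℕ × ℕ)) :=
  {e | e.1.1 < W.length ∧ e.2.1 < W.length ∧ e.1.2 ≤ W.length ∧ e.2.2 ≤ W.length ∧
    LinkedPair O (segment W e.1.1 e.1.2) (segment W e.2.1 e.2.2)}

/-- The set `LP₂(V,W)` of linked pairs of the pair of cyclic words `(V,W)`:
pairs of occurrences of subwords of powers of `V` resp. `W` which are linked.
(The normalization `len V^{j-1} < len P ≤ len V^j` is implicit in the encoding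
of an occurrence by a starting position `< len V` and a length.) -/
def LP2 (O V W : List (Letter n)) : Set ((ℕ × ℕ) × (ℕ × ℕ)) :=
  {e | e.1.1 < V.length ∧ e.2.1 < W.length ∧
    LinkedPair O (segment V e.1.1 e.1.2) (segment W e.2.1 e.2.2)}

end ChasCW

namespace ChasCW

-- aux lemmas
lemma bar_bar (x : Letter n) : bar (bar x) = x := by simp [bar]
lemma bar_ne (x : Letter n) : bar x ≠ x := by simp [bar, Prod.ext_iff]
lemma bar_inj {x y : Letter n} (h : bar x = bar y) : x = y := by
  have := congrArg bar h; rwa [bar_bar, bar_bar] at this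

lemma two_mem_sublist {α : Type*} {b c : α} {T : List α} (hb : b ∈ T) (hc : c ∈ T)
    (h : b ≠ c) : [b, c].Sublist T ∨ [c, b].Sublist T := by
  induction T with
  | nil => cases hb
  | cons x t ih =>
    rcases eq_or_ne x b with rfl | hxb
    · left
      have hc' : c ∈ t := by
        rcases List.mem_cons.mp hc with rfl | h'
        · exact absurd rfl h.symm
        · exact h'
      exact List.Sublist.cons₂ _ (List.singleton_sublist.mpr hc')
    rcases eq_or_ne x c with rfl | hxc
    · right
      have hb' : b ∈ t := by
        rcases List.mem_cons.mp hb with rfl | h'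
        · exact absurd rfl h
        · exact h'
      exact List.Sublist.cons₂ _ (List.singleton_sublist.mpr hb')
    · have hb' : b ∈ t := by
        rcases List.mem_cons.mp hb with rfl | h' ; exact absurd rfl hxb.symm; exact h'
      have hc' : c ∈ t := by
        rcases List.mem_cons.mp hc with rfl | h' ; exact absurd rfl hxc.symm; exact h'
      rcases ih hb' hc' with h' | h'
      · exact Or.inl (h'.cons x)
      · exact Or.inr (h'.cons x)

lemma cyclicEmbeds_triple {O : List (Letter n)} (hO : SurfaceSymbol O)
    {a b c : Letter n} (hab : a ≠ b) (hac : a ≠ c) (hbc : b ≠ c) :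
    CyclicEmbeds [a, b, c] O ∨ CyclicEmbeds [a, b, c] O.reverse := by
  have ha : a ∈ O := List.count_pos_iff.mp (by rw [hO.2 a]; norm_num)
  have hb : b ∈ O := List.count_pos_iff.mp (by rw [hO.2 b]; norm_num)
  have hc : c ∈ O := List.count_pos_iff.mp (by rw [hO.2 c]; norm_num)
  obtain ⟨s, t, rfl⟩ := List.append_of_mem ha
  have hj : s.length ≤ (s ++ a :: t).length := by simp
  have hrot : (s ++ a :: t).rotate s.length = a :: (t ++ s) := by
    rw [List.rotate_eq_drop_append_take hj, List.drop_left, List.take_left]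
    simp
  have hnd : ([a, b, c] : List (Letter n)).Nodup := by simp [hab, hac, hbc]
  have hbm : b ∈ t ++ s := by
    rcases List.mem_append.mp hb with h' | h'
    · exact List.mem_append.mpr (Or.inr h')
    · rcases List.mem_cons.mp h' with rfl | h''
      · exact absurd rfl hab.symm
      · exact List.mem_append.mpr (Or.inl h'')
  have hcm : c ∈ t ++ s := by
    rcases List.mem_append.mp hc with h' | h'
    · exact List.mem_append.mpr (Or.inr h')
    · rcases List.mem_cons.mp h' with rfl | h''
      · exact absurd rfl hac.symm
      · exact List.mem_append.mpr (Or.inl h'')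
  rcases two_mem_sublist hbm hcm hbc with h' | h'
  · left
    exact ⟨hnd, 0, by norm_num, s.length, hj, by
      rw [List.rotate_zero, hrot]; exact h'.cons₂ a⟩
  · right
    have hsub : ([a, c, b] : List _).Sublist ((s ++ a :: t).rotate s.length) := by
      rw [hrot]; exact h'.cons₂ a
    have hsub2 : ([b, c, a] : List _).Sublist ((s ++ a :: t).rotate s.length).reverse := by
      have := hsub.reverse; simpa using this
    have hrotd : (s ++ a :: t).reverse ~r ((s ++ a :: t).rotate s.length).reverse :=
      (List.IsRotated.reverse ⟨s.length, rfl⟩)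
    obtain ⟨m, hm⟩ := hrotd
    have hpos : 0 < (s ++ a :: t).reverse.length := by simp
    refine ⟨hnd, 1, by norm_num, m % (s ++ a :: t).reverse.length,
      (Nat.mod_lt _ hpos).le, ?_⟩
    rw [List.rotate_mod, hm]
    exact hsub2

lemma orient_triple {O : List (Letter n)} (hO : SurfaceSymbol O)
    {a b c : Letter n} (hab : a ≠ b) (hac : a ≠ c) (hbc : b ≠ c) :
    orient O [a, b, c] = 1 ∨ orient O [a, b, c] = -1 := by
  rcases cyclicEmbeds_triple hO hab hac hbc with h | h
  · left; simp [orient, h]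
  · by_cases h1 : CyclicEmbeds [a, b, c] O
    · left; simp [orient, h1]
    · right; simp [orient, h1, h]

lemma orient_cases (O w : List (Letter n)) :
    orient O w = 1 ∨ orient O w = -1 ∨ orient O w = 0 := by
  unfold orient; split
  · exact Or.inl rfl
  split
  · exact Or.inr (Or.inl rfl)
  · exact Or.inr (Or.inr rfl)

lemma reduced_ne_wordInv {Y : List (Letter n)} (h : Reduced Y) (hne : Y ≠ []) :
    Y ≠ wordInv Y := by
  intro heq
  set k := Y.length with hk
  have hkpos : 0 < k := List.length_pos_iff.mpr hne
  have hget : ∀ i, i < k → Y[i]? = (Y[k - 1 - i]?).map bar := by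
    intro i hi
    conv_lhs => rw [heq]
    rw [wordInv, List.getElem?_reverse (by simpa using hi), List.getElem?_map]
    congr 2
    simp [← hk]
  rcases Nat.even_or_odd k with ⟨m, hm⟩ | ⟨m, hm⟩
  · have hm1 : 1 ≤ m := by omega
    have ho := hget m (by omega)
    rw [show k - 1 - m = m - 1 from by omega] at ho
    have h2 := List.isChain_iff_getElem.mp h (m - 1) (by omega)
    apply h2
    have hx : Y[m - 1 + 1]? = some (bar (Y[m - 1]'(by omega))) := by
      rw [show m - 1 + 1 = m from by omega, ho, List.getElem?_eq_getElem (by omega)]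
      rfl
    rw [List.getElem?_eq_getElem (by omega)] at hx
    exact Option.some_injective _ hx
  · have ho := hget m (by omega)
    rw [show k - 1 - m = m from by omega] at ho
    rw [List.getElem?_eq_getElem (show m < Y.length from by omega)] at ho
    have : Y[m]'(by omega) = bar (Y[m]'(by omega)) := Option.some_injective _ (by simpa using ho)
    exact bar_ne _ this.symm


lemma head_ne_bar {p z x₁ : Letter n} {Y : List (Letter n)}
    (hR : Reduced (p :: (Y ++ [z]))) (hx : Y.head? = some x₁) : x₁ ≠ bar p := by
  cases Y with
  | nil => cases hx
  | cons y Y' =>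
    simp only [List.head?_cons, Option.some.injEq] at hx
    subst hx
    rw [List.cons_append] at hR
    exact (List.isChain_cons_cons.mp hR).1

/-- Lemma 2.6(a): for every linked pair `(P,Q)` the sign is
never zero: `sign(P,Q) ∈ {1,-1}`. -/
theorem sign_of_linked_pair_ne_zero {n : ℕ} (O P Q : List (Letter n))
    (hO : SurfaceSymbol O) (h : LinkedPair O P Q) :
    signLP O P Q = 1 ∨ signLP O P Q = -1 := by
  rcases h with ⟨p₁, p₂, q₁, q₂, rfl, rfl, h1⟩ |
    ⟨p₁, p₂, q₁, q₂, x₁, x₂, Y, rfl, rfl, h2⟩ |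
    ⟨p₁, p₂, q₁, q₂, x₁, x₂, Y, rfl, rfl, h3⟩
  · obtain ⟨-, -, hne⟩ := h1
    have hs : signLP O [p₁, p₂] [q₁, q₂] = orient O [bar p₁, bar q₁, p₂, q₂] := by
      simp [signLP]
    rw [hs]
    rcases orient_cases O [bar p₁, bar q₁, p₂, q₂] with h' | h' | h'
    · exact Or.inl h'
    · exact Or.inr h'
    · exact absurd h' hne
  · obtain ⟨hYne, hx₁, hx₂, hpq1, hpq2, hRP, hRQ, -⟩ := h2
    have hRY : Reduced Y := List.IsChain.infix hRP ⟨[p₁], [p₂], by simp⟩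
    have hYinv : Y ≠ wordInv Y := reduced_ne_wordInv hRY hYne
    have hs : signLP O (p₁ :: (Y ++ [p₂])) (q₁ :: (Y ++ [q₂]))
        = orient O [bar p₁, bar q₁, x₁] := by
      simp [signLP, List.getLast?_concat, List.dropLast_concat, hYne, hx₁, hx₂, hYinv]
    have d1 : bar p₁ ≠ bar q₁ := fun h' => hpq1 (bar_inj h')
    have d2 : bar p₁ ≠ x₁ := (head_ne_bar hRP hx₁).symm
    have d3 : bar q₁ ≠ x₁ := (head_ne_bar hRQ hx₁).symm
    rw [hs]
    exact orient_triple hO d1 d2 d3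
  · obtain ⟨hYne, hx₁, hx₂, hp1, hp2, hRP, hRQ, -⟩ := h3
    have hWne : wordInv Y ≠ [] := by
      simp [wordInv, hYne]
    have hs : signLP O (p₁ :: (Y ++ [p₂])) (q₁ :: (wordInv Y ++ [q₂]))
        = orient O [q₂, bar p₁, x₁] := by
      simp [signLP, List.getLast?_concat, List.dropLast_concat, hYne, hx₁, hx₂]
    have hWlast : (wordInv Y).getLast? = some (bar x₁) := by
      rw [wordInv, List.getLast?_reverse, List.head?_map, hx₁]
      rfl
    have hlast : (q₁ :: wordInv Y).getLast? = some (bar x₁) := by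
      rw [show q₁ :: wordInv Y = [q₁] ++ wordInv Y from rfl, List.getLast?_append, hWlast]
      rfl
    have d1 : q₂ ≠ bar p₁ := fun h' => hp1 (by rw [h', bar_bar])
    have d2 : q₂ ≠ x₁ := by
      rw [← List.cons_append] at hRQ
      have hr := (List.isChain_append.mp hRQ).2.2 (bar x₁) (by simp [hlast]) q₂ (by simp)
      rwa [bar_bar] at hr
    have d3 : bar p₁ ≠ x₁ := (head_ne_bar hRP hx₁).symm
    rw [hs]
    exact orient_triple hO d1 d2 d3

end ChasCW
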